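/- Let h ∈ ℝ³ with ‖h‖₂ = 1 and let {r_λ}_{λ∈[0,1]} ⊂ ℝ³ be a continuous family of Bloch vectors with ‖r_λ‖₂ ≤ 1, h·r_λ = E₀ for all λ, and such that S(ρ(r_λ)) is strictly increasing in λ. Define λ⋆ := inf{λ : ‖r_λ‖₁ ≤ 1} (the first λ at which ρ(r_λ) is a stabilizer state). Then the set of λ for which S(ρ(r_λ)) < min{S(ρ(s)) : ‖s‖₁ ≤ 1, h·s = E₀} is an initial interval [0, λ_crt) with λ_crt ≤ λ⋆, and λ_crt = λ⋆ if and only if ‖r_{λ⋆}‖₂ = max{‖s‖₂ : ‖s‖₁ ≤ 1, h·s = E₀}. -/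

import Mathlib

open Matrix BigOperators

noncomputable section

/-- The Pauli X matrix. -/
def PX : Matrix (Fin 2) (Fin 2) ℂ := !![0, 1; 1, 0]
/-- The Pauli Y matrix. -/
def PY : Matrix (Fin 2) (Fin 2) ℂ := !![0, -Complex.I; Complex.I, 0]
/-- The Pauli Z matrix. -/
def PZ : Matrix (Fin 2) (Fin 2) ℂ := !![1, 0; 0, -1]

/-- The single-qubit state `ρ(r) = ½(I + r·σ)` with Bloch vector `r`. -/
def blochRho (r : Fin 3 → ℝ) : Matrix (Fin 2) (Fin 2) ℂ :=
  (2⁻¹ : ℂ) • (1 + (r 0 : ℂ) • PX + (r 1 : ℂ) • PY + (r 2 : ℂ) • PZ)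

/-- Euclidean norm `‖r‖₂` on `ℝ³`. -/
def norm2 (r : Fin 3 → ℝ) : ℝ := Real.sqrt (∑ i, r i ^ 2)

/-- `ℓ¹` norm `‖r‖₁` on `ℝ³`. -/
def norm1 (r : Fin 3 → ℝ) : ℝ := ∑ i, |r i|

/-- Euclidean inner product on `ℝ³`. -/
def dot3 (h r : Fin 3 → ℝ) : ℝ := ∑ i, h i * r i

/-- Von Neumann entropy `S(ρ) = −tr(ρ log ρ)`, computed via the eigenvalues of a
Hermitian matrix (junk value `0` for non-Hermitian input). -/
def vnEntropy {m : Type} [Fintype m] [DecidableEq m] (ρ : Matrix m m ℂ) : ℝ :=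
  if h : ρ.IsHermitian then ∑ i, Real.negMulLog (h.eigenvalues i) else 0

/-- The binary entropy `H₂(p) = −p log p − (1−p) log (1−p)`. -/
def binEnt (p : ℝ) : ℝ := Real.negMulLog p + Real.negMulLog (1 - p)

/-- The minimal eigenvalue `E_gs(H)` of a matrix. -/
def minEig {m : Type} [Fintype m] [DecidableEq m] (H : Matrix m m ℂ) : ℝ :=
  sInf {E : ℝ | ∃ ψ : m → ℂ, ψ ≠ 0 ∧ H.mulVec ψ = (E : ℂ) • ψ}

lemma blochRho_eq (s : Fin 3 → ℝ) : blochRho s =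
    !![((1 + s 2)/2 : ℂ), (s 0 - s 1 * Complex.I)/2;
       (s 0 + s 1 * Complex.I)/2, (1 - s 2)/2] := by
  ext i j
  fin_cases i <;> fin_cases j <;>
    simp [blochRho, PX, PY, PZ, Matrix.one_apply] <;> ring

lemma blochRho_herm (s : Fin 3 → ℝ) : (blochRho s).IsHermitian := by
  rw [blochRho_eq]
  ext i j
  fin_cases i <;> fin_cases j <;>
    simp [Matrix.conjTranspose_apply, map_div₀, Complex.conj_I] <;> ring

lemma blochRho_trace (s : Fin 3 → ℝ) : (blochRho s).trace = 1 := by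
  rw [blochRho_eq, Matrix.trace_fin_two]
  simp
  ring

lemma blochRho_det (s : Fin 3 → ℝ) :
    (blochRho s).det = (((1 - ∑ i, s i ^ 2) / 4 : ℝ) : ℂ) := by
  rw [blochRho_eq, Matrix.det_fin_two_of]
  have : (Complex.I : ℂ)^2 = -1 := Complex.I_sq
  push_cast [Fin.sum_univ_three]
  ring_nf
  rw [Complex.I_sq]
  ring


lemma herm_trace_eq {n : Type} [Fintype n] [DecidableEq n] {A : Matrix n n ℂ}
    (hA : A.IsHermitian) : A.trace = ∑ i, (hA.eigenvalues i : ℂ) := by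
  conv_lhs => rw [hA.spectral_theorem]
  rw [Unitary.conjStarAlgAut_apply, Matrix.trace_mul_cycle]
  rw [(Matrix.mem_unitaryGroup_iff').mp (Matrix.IsHermitian.eigenvectorUnitary hA).2, Matrix.one_mul]
  simp [Matrix.trace_diagonal]

lemma vnEntropy_blochRho (s : Fin 3 → ℝ) :
    vnEntropy (blochRho s) = binEnt ((1 + norm2 s) / 2) := by
  have hH := blochRho_herm s
  rw [vnEntropy, dif_pos hH, Fin.sum_univ_two]
  set a := hH.eigenvalues 0 with ha
  set b := hH.eigenvalues 1 with hb
  have htr : a + b = 1 := by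
    have := herm_trace_eq hH
    rw [blochRho_trace, Fin.sum_univ_two] at this
    exact_mod_cast this.symm
  have hsq : (∑ i, s i ^ 2) = norm2 s ^ 2 := by
    rw [norm2, Real.sq_sqrt]
    positivity
  have hdet : a * b = (1 - norm2 s ^ 2) / 4 := by
    have h1 := hH.det_eq_prod_eigenvalues
    rw [blochRho_det, Fin.prod_univ_two] at h1
    have h3 : hH.eigenvalues 0 * hH.eigenvalues 1 = (1 - ∑ i, s i ^ 2) / 4 := by
      have h2 := congrArg Complex.re h1
      push_cast [Complex.mul_re] at h2
      simpa [← Complex.ofReal_pow] using h2.symm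
    rw [hsq] at h3; exact h3
  have ht0 : 0 ≤ norm2 s := Real.sqrt_nonneg _
  have hfac : (a - b - norm2 s) * (a - b + norm2 s) = 0 := by nlinarith
  rcases mul_eq_zero.mp hfac with hc | hc
  · have hA : a = (1 + norm2 s) / 2 := by linarith
    have hB : b = (1 - norm2 s) / 2 := by linarith
    rw [hA, hB, binEnt]
    ring_nf
  · have hA : a = (1 - norm2 s) / 2 := by linarith
    have hB : b = (1 + norm2 s) / 2 := by linarith
    rw [hA, hB, binEnt]
    ring_nf

lemma binEnt_strictAnti : StrictAntiOn (fun t : ℝ => binEnt ((1 + t) / 2)) (Set.Icc 0 1) := by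
  have hcont : Continuous (fun t : ℝ => binEnt ((1 + t) / 2)) := by
    simp only [binEnt]
    fun_prop
  apply strictAntiOn_of_deriv_neg (convex_Icc 0 1) hcont.continuousOn
  intro x hx
  rw [interior_Icc] at hx
  obtain ⟨hx0, hx1⟩ := hx
  have h1 : (0:ℝ) < (1 + x) / 2 := by linarith
  have h2 : (0:ℝ) < (1 - x) / 2 := by linarith
  have hd1 : HasDerivAt (fun t : ℝ => (1 + t) / 2) (1/2) x := by
    simpa using ((hasDerivAt_id x).const_add 1).div_const 2
  have hd2 : HasDerivAt (fun t : ℝ => 1 - (1 + t) / 2) (-(1/2)) x := by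
    simpa using hd1.const_sub 1
  have hD1 : HasDerivAt (fun t : ℝ => Real.negMulLog ((1 + t) / 2))
      ((-Real.log ((1 + x)/2) - 1) * (1/2)) x := by
    have := (Real.hasDerivAt_negMulLog h1.ne').comp x hd1; exact this
  have hD2 : HasDerivAt (fun t : ℝ => Real.negMulLog (1 - (1 + t) / 2))
      ((-Real.log (1 - (1 + x)/2) - 1) * (-(1/2))) x := by
    have := (Real.hasDerivAt_negMulLog (by rw [show 1 - (1+x)/2 = (1-x)/2 by ring]; exact h2.ne')).comp x hd2; exact this
  have hD : HasDerivAt (fun t : ℝ => binEnt ((1 + t) / 2))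
      ((-Real.log ((1 + x)/2) - 1) * (1/2) + (-Real.log (1 - (1 + x)/2) - 1) * (-(1/2))) x := by
    simp only [binEnt]; exact hD1.add hD2
  rw [hD.deriv]
  have hlog : Real.log ((1 - x)/2) < Real.log ((1 + x)/2) :=
    Real.log_lt_log h2 (by linarith)
  rw [show 1 - (1+x)/2 = (1-x)/2 by ring]
  nlinarith

lemma norm2_nonneg (s : Fin 3 → ℝ) : 0 ≤ norm2 s := Real.sqrt_nonneg _


lemma norm2_le_norm1 (s : Fin 3 → ℝ) : norm2 s ≤ norm1 s := by
  rw [norm2]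
  have h1 : ∑ i, s i ^ 2 ≤ (norm1 s) ^ 2 := by
    rw [norm1, Fin.sum_univ_three, Fin.sum_univ_three]
    nlinarith [abs_nonneg (s 0), abs_nonneg (s 1), abs_nonneg (s 2),
      sq_abs (s 0), sq_abs (s 1), sq_abs (s 2), abs_mul_abs_self (s 0)]
  calc Real.sqrt (∑ i, s i ^ 2) ≤ Real.sqrt ((norm1 s)^2) := Real.sqrt_le_sqrt h1
  _ = |norm1 s| := Real.sqrt_sq_eq_abs _
  _ = norm1 s := abs_of_nonneg (by rw [norm1]; positivity)

lemma cont_norm2 : Continuous norm2 := by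
  unfold norm2
  fun_prop

lemma cont_norm1 : Continuous norm1 := by
  unfold norm1
  fun_prop

lemma cont_dot3 (h : Fin 3 → ℝ) : Continuous (dot3 h) := by
  unfold dot3
  fun_prop

lemma K_compact (h : Fin 3 → ℝ) (E₀ : ℝ) :
    IsCompact {s : Fin 3 → ℝ | norm1 s ≤ 1 ∧ dot3 h s = E₀} := by
  have hsub : {s : Fin 3 → ℝ | norm1 s ≤ 1 ∧ dot3 h s = E₀} ⊆
      Set.Icc (fun _ => (-1 : ℝ)) (fun _ => 1) := by
    intro s hs
    constructor <;> intro i <;>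
    · have h1 : |s i| ≤ norm1 s := by
        rw [norm1]
        exact Finset.single_le_sum (f := fun j => |s j|) (fun j _ => abs_nonneg _) (Finset.mem_univ i)
      have := abs_le.mp (h1.trans hs.1)
      simp only [Pi.neg_apply, Pi.one_apply]
      linarith [this.1, this.2]
  have hclosed : IsClosed {s : Fin 3 → ℝ | norm1 s ≤ 1 ∧ dot3 h s = E₀} :=
    (isClosed_le cont_norm1 continuous_const).inter
      (isClosed_eq (cont_dot3 h) continuous_const)
  exact (isCompact_Icc).of_isClosed_subset hclosed hsub

/-- optimality of the heat-based witness along a fixed-energy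
noisy family of single-qubit states. -/
theorem heat_witness_tightness (h : Fin 3 → ℝ) (E₀ : ℝ) (r : ℝ → Fin 3 → ℝ)
    (hh : norm2 h = 1)
    (hcont : ContinuousOn r (Set.Icc 0 1))
    (hrad : ∀ lam ∈ Set.Icc (0 : ℝ) 1, norm2 (r lam) ≤ 1)
    (hfixE : ∀ lam ∈ Set.Icc (0 : ℝ) 1, dot3 h (r lam) = E₀)
    (hmono : StrictMonoOn (fun lam => vnEntropy (blochRho (r lam))) (Set.Icc 0 1))
    (hend : norm1 (r 1) ≤ 1)
    (lamStar : ℝ)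
    (hlamStar : lamStar = sInf {lam | lam ∈ Set.Icc (0 : ℝ) 1 ∧ norm1 (r lam) ≤ 1}) :
    ∃ lamCrt : ℝ, lamCrt ≤ lamStar ∧
      {lam | lam ∈ Set.Icc (0 : ℝ) 1 ∧
          vnEntropy (blochRho (r lam)) <
            sInf ((fun s => vnEntropy (blochRho s)) ''
              {s : Fin 3 → ℝ | norm1 s ≤ 1 ∧ dot3 h s = E₀})} = Set.Ico 0 lamCrt ∧
      (lamCrt = lamStar ↔
        norm2 (r lamStar) =
          sSup (norm2 '' {s : Fin 3 → ℝ | norm1 s ≤ 1 ∧ dot3 h s = E₀})) := by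
  classical
  set K : Set (Fin 3 → ℝ) := {s : Fin 3 → ℝ | norm1 s ≤ 1 ∧ dot3 h s = E₀} with hK
  set f : ℝ → ℝ := fun t => binEnt ((1 + t) / 2) with hf
  set g : ℝ → ℝ := fun lam => norm2 (r lam) with hg
  have h1mem : (1 : ℝ) ∈ Set.Icc (0 : ℝ) 1 := ⟨zero_le_one, le_refl 1⟩
  have hKne : K.Nonempty := ⟨r 1, hend, hfixE 1 h1mem⟩
  obtain ⟨s₀, hs₀K, hRmax_eq, hRmax_ge⟩ :=
    (K_compact h E₀).exists_sSup_image_eq_and_ge hKne cont_norm2.continuousOn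
  -- basic facts
  have hs₀1 : norm2 s₀ ≤ 1 := (norm2_le_norm1 s₀).trans hs₀K.1
  have hs₀mem : norm2 s₀ ∈ Set.Icc (0:ℝ) 1 := ⟨norm2_nonneg _, hs₀1⟩
  have hKmem : ∀ s ∈ K, norm2 s ∈ Set.Icc (0:ℝ) 1 :=
    fun s hs => ⟨norm2_nonneg _, (norm2_le_norm1 s).trans hs.1⟩
  have hgmem : ∀ lam ∈ Set.Icc (0:ℝ) 1, g lam ∈ Set.Icc (0:ℝ) 1 :=
    fun lam hlam => ⟨norm2_nonneg _, hrad lam hlam⟩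
  -- value of the inf
  have hM : sInf ((fun s => vnEntropy (blochRho s)) '' K) = f (norm2 s₀) := by
    apply IsLeast.csInf_eq
    constructor
    · exact ⟨s₀, hs₀K, vnEntropy_blochRho s₀⟩
    · rintro v ⟨s, hsK, rfl⟩
      show f (norm2 s₀) ≤ vnEntropy (blochRho s)
      rw [vnEntropy_blochRho s]
      exact binEnt_strictAnti.antitoneOn (hKmem s hsK) hs₀mem (hRmax_ge s hsK)
  -- g is strictly antitone
  have hganti : StrictAntiOn g (Set.Icc 0 1) := by
    intro a ha b hb hab
    by_contra hle
    push_neg at hle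
    have h1 : f (g a) < f (g b) := by
      have := hmono ha hb hab
      simpa only [vnEntropy_blochRho] using this
    have h2 : f (g b) ≤ f (g a) :=
      binEnt_strictAnti.antitoneOn (hgmem a ha) (hgmem b hb) hle
    linarith
  have hgcont : ContinuousOn g (Set.Icc 0 1) := cont_norm2.comp_continuousOn hcont
  -- the set B and its inf c
  set B : Set ℝ := {lam | lam ∈ Set.Icc (0:ℝ) 1 ∧ g lam ≤ norm2 s₀} with hB
  have hBne : (1:ℝ) ∈ B := ⟨h1mem, hRmax_ge (r 1) ⟨hend, hfixE 1 h1mem⟩⟩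
  have hBbdd : BddBelow B := ⟨0, fun x hx => hx.1.1⟩
  have hBclosed : IsClosed B := by
    have : B = Set.Icc (0:ℝ) 1 ∩ g ⁻¹' Set.Iic (norm2 s₀) := rfl
    rw [this]
    exact hgcont.preimage_isClosed_of_isClosed isClosed_Icc isClosed_Iic
  set c : ℝ := sInf B with hc
  have hcB : c ∈ B := hBclosed.csInf_mem ⟨1, hBne⟩ hBbdd
  -- lamStar facts
  have hB1closed : IsClosed {lam | lam ∈ Set.Icc (0:ℝ) 1 ∧ norm1 (r lam) ≤ 1} := by
    have : {lam | lam ∈ Set.Icc (0:ℝ) 1 ∧ norm1 (r lam) ≤ 1}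
        = Set.Icc (0:ℝ) 1 ∩ (fun lam => norm1 (r lam)) ⁻¹' Set.Iic 1 := rfl
    rw [this]
    exact (cont_norm1.comp_continuousOn hcont).preimage_isClosed_of_isClosed
      isClosed_Icc isClosed_Iic
  have hlamB1 : lamStar ∈ {lam | lam ∈ Set.Icc (0:ℝ) 1 ∧ norm1 (r lam) ≤ 1} := by
    rw [hlamStar]
    exact hB1closed.csInf_mem ⟨1, h1mem, hend⟩ ⟨0, fun x hx => hx.1.1⟩
  have hlamIcc : lamStar ∈ Set.Icc (0:ℝ) 1 := hlamB1.1
  have hrlamK : r lamStar ∈ K := ⟨hlamB1.2, hfixE lamStar hlamIcc⟩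
  have hglam_le : g lamStar ≤ norm2 s₀ := hRmax_ge (r lamStar) hrlamK
  have hcle : c ≤ lamStar := csInf_le hBbdd ⟨hlamIcc, hglam_le⟩
  -- the detection set equals Ico 0 c
  have hA : {lam | lam ∈ Set.Icc (0:ℝ) 1 ∧
      vnEntropy (blochRho (r lam)) <
        sInf ((fun s => vnEntropy (blochRho s)) '' K)} = Set.Ico 0 c := by
    ext lam
    simp only [Set.mem_setOf_eq, Set.mem_Ico]
    rw [hM, vnEntropy_blochRho (r lam)]
    constructor
    · rintro ⟨hmem, hlt⟩
      have hlt' : f (g lam) < f (norm2 s₀) := hlt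
      have hgt : norm2 s₀ < g lam := by
        by_contra hle
        push_neg at hle
        have := binEnt_strictAnti.antitoneOn (hgmem lam hmem) hs₀mem hle
        exact absurd hlt' (not_lt.mpr this)
      refine ⟨hmem.1, ?_⟩
      by_contra h'
      push_neg at h'
      rcases eq_or_lt_of_le h' with he | hlt'
      · exact absurd hcB.2 (not_le.mpr (he ▸ hgt))
      · have := hganti hcB.1 hmem hlt'
        linarith [hcB.2]
    · rintro ⟨h0, hlt⟩
      have hmem : lam ∈ Set.Icc (0:ℝ) 1 := ⟨h0, hlt.le.trans hcB.1.2⟩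
      have hnB : lam ∉ B := notMem_of_lt_csInf hlt hBbdd
      have hgt : norm2 s₀ < g lam := by
        by_contra hle
        push_neg at hle
        exact hnB ⟨hmem, hle⟩
      exact ⟨hmem, binEnt_strictAnti hs₀mem (hgmem lam hmem) hgt⟩
  by_cases hrm : norm2 (r lamStar) = norm2 s₀
  · -- tight case
    have hceq : c = lamStar := by
      apply le_antisymm hcle
      apply le_csInf ⟨1, hBne⟩
      intro b hb
      by_contra hbl
      push_neg at hbl
      have := hganti hb.1 hlamIcc hbl
      rw [show g lamStar = norm2 s₀ from hrm] at this
      linarith [hb.2]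
    refine ⟨lamStar, le_refl _, by rw [hA, hceq], ?_⟩
    constructor
    · intro _; rw [hRmax_eq]; exact hrm
    · intro _; rfl
  · have hglt : g lamStar < norm2 s₀ := lt_of_le_of_ne hglam_le hrm
    by_cases hceq : c = lamStar
    · -- degenerate case: lamStar must be 0
      have h0 : lamStar = 0 := by
        by_contra hne
        have hpos : 0 < lamStar := lt_of_le_of_ne hlamIcc.1 (Ne.symm hne)
        have hcw : ContinuousWithinAt g (Set.Icc 0 1) lamStar := hgcont lamStar hlamIcc
        have hev : g ⁻¹' Set.Iio (norm2 s₀) ∈ nhdsWithin lamStar (Set.Icc 0 1) :=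
          hcw (Iio_mem_nhds hglt)
        have hsub : Set.Ico (0:ℝ) lamStar ⊆ Set.Icc 0 1 :=
          fun x hx => ⟨hx.1, hx.2.le.trans hlamIcc.2⟩
        have hnb : (nhdsWithin lamStar (Set.Ico (0:ℝ) lamStar)).NeBot := by
          rw [← mem_closure_iff_nhdsWithin_neBot, closure_Ico hpos.ne]
          exact ⟨hlamIcc.1, le_refl _⟩
        have hev' : g ⁻¹' Set.Iio (norm2 s₀) ∈ nhdsWithin lamStar (Set.Ico 0 lamStar) :=
          nhdsWithin_mono lamStar hsub hev
        obtain ⟨x, hx1, hx2⟩ :=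
          Filter.nonempty_of_mem (Filter.inter_mem hev' self_mem_nhdsWithin)
        have hxB : x ∈ B := ⟨⟨hx2.1, hx2.2.le.trans hlamIcc.2⟩, (Set.mem_Iio.mp hx1).le⟩
        have hcx : c ≤ x := csInf_le hBbdd hxB
        rw [hceq] at hcx
        linarith [hx2.2]
      refine ⟨-1, by linarith [hlamIcc.1], ?_, ?_⟩
      · rw [hA, hceq, h0, Set.Ico_self, Set.Ico_eq_empty (by norm_num : ¬ (0:ℝ) < -1)]
      · constructor
        · intro h'; exfalso; rw [h0] at h'; norm_num at h'
        · intro h'; exfalso; rw [hRmax_eq] at h'; exact hrm h'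
    · refine ⟨c, hcle, hA, ?_⟩
      constructor
      · intro h'; exact absurd h' hceq
      · intro h'; exfalso; rw [hRmax_eq] at h'; exact hrm h'
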